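/- Let X be a finite set and S a commutative nilpotent subsemigroup of T(X) whose zero e has rank r ≥ 2. Then |S| ≤ ξ(|X| − r + 1), where ξ(n) = max{t^(n−t) : 1 ≤ t ≤ n}. -/

import Mathlib

/-- `S` is a subsemigroup of the full transformation semigroup on `X`
(maps act on the right, so the product `β·γ` is `γ ∘ β`). -/
def IsTransSub {X : Type*} (S : Set (X → X)) : Prop :=
  ∀ β ∈ S, ∀ γ ∈ S, (γ ∘ β) ∈ S

/-- `e` is a zero element of `S`: `βe = eβ = e` for all `β ∈ S`. -/
def IsZeroElem {X : Type*} (S : Set (X → X)) (e : X → X) : Prop :=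
  e ∈ S ∧ ∀ β ∈ S, e ∘ β = e ∧ β ∘ e = e

/-- `S` is nilpotent with zero `e`: some `m ≥ 1` such that every product of
`m` elements of `S` equals `e`. -/
def IsNilpotentSub {X : Type*} (S : Set (X → X)) (e : X → X) : Prop :=
  ∃ m : ℕ, 0 < m ∧ ∀ L : List (X → X), L.length = m → (∀ f ∈ L, f ∈ S) →
    L.foldr (· ∘ ·) id = e

/-- `S` is commutative. -/
def IsCommSub {X : Type*} (S : Set (X → X)) : Prop :=
  ∀ β ∈ S, ∀ γ ∈ S, β ∘ γ = γ ∘ β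

/-- `S` is a null semigroup with zero `e`: every product of two elements is `e`. -/
def IsNullSub {X : Type*} (S : Set (X → X)) (e : X → X) : Prop :=
  ∀ β ∈ S, ∀ γ ∈ S, γ ∘ β = e

/-- `ξ(n) = max { t ^ (n - t) : 1 ≤ t ≤ n }`. -/
def xi (n : ℕ) : ℕ := (Finset.Icc 1 n).sup (fun t => t ^ (n - t))

/-- `α(n) = max { t ∈ {1,…,n} : t ^ (n - t) = ξ(n) }`. -/
def alphaMax (n : ℕ) : ℕ :=
  ((Finset.Icc 1 n).filter (fun t => t ^ (n - t) = xi n)).sup id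

private lemma stmt17_count_lemma {X Y : Type*}
    (F : Finset (X → Y)) (xs : List X) (x₀ : X) (y₀ : Y) (c : ℕ)
    (W : Y → Finset Y)
    (hW : ∀ v, (W v).card ≤ c)
    (hval : ∀ k, k < xs.length → ∀ β ∈ F, ∀ γ ∈ F,
      (∀ j, j < k → β (xs.getD j x₀) = γ (xs.getD j x₀)) →
      γ (xs.getD k x₀) ∈ W (β (xs.getD k x₀)))
    (hinj : ∀ β ∈ F, ∀ γ ∈ F,
      (∀ j, j < xs.length → β (xs.getD j x₀) = γ (xs.getD j x₀)) → β = γ) :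
    F.card ≤ c ^ xs.length := by
  classical
  set Ψ : ℕ → (X → Y) → (ℕ → Y) :=
    fun k β i => if i < k then β (xs.getD i x₀) else y₀ with hΨ
  have key : ∀ k, k ≤ xs.length → (F.image (Ψ k)).card ≤ c ^ k := by
    intro k
    induction k with
    | zero =>
      intro _
      have hsub : F.image (Ψ 0) ⊆ {fun _ => y₀} := by
        intro l hl
        simp only [Finset.mem_image] at hl
        obtain ⟨β, _, rfl⟩ := hl
        simp [hΨ]
      calc (F.image (Ψ 0)).card ≤ ({fun _ => y₀} : Finset (ℕ → Y)).card :=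
            Finset.card_le_card hsub
        _ ≤ 1 := by simp
        _ = c ^ 0 := by simp
    | succ k ih =>
      intro hk1
      have hk : k < xs.length := hk1
      set s := F.image (Ψ (k + 1)) with hs
      set f : (ℕ → Y) → (ℕ → Y) := fun l i => if i < k then l i else y₀ with hf
      have himg : s.image f ⊆ F.image (Ψ k) := by
        intro p hp
        simp only [Finset.mem_image, hs] at hp
        obtain ⟨l, hls, rfl⟩ := hp
        obtain ⟨β, hβ, rfl⟩ := hls
        refine Finset.mem_image.2 ⟨β, hβ, ?_⟩
        funext i
        simp only [hf, hΨ]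
        by_cases hik : i < k
        · simp [hik, hik.trans (Nat.lt_succ_self k)]
        · simp [hik]
      have hfib : ∀ p ∈ s.image f, (s.filter fun l => f l = p).card ≤ c := by
        intro p hp
        simp only [Finset.mem_image] at hp
        obtain ⟨l₀, hl₀s, hl₀⟩ := hp
        obtain ⟨β₀, hβ₀, hl₀eq⟩ := Finset.mem_image.1 hl₀s
        refine Finset.card_le_card_of_injOn (fun l => l k)
          ?_ ?_ |>.trans (hW (β₀ (xs.getD k x₀)))
        · intro l hl
          simp only [Finset.mem_coe, Finset.mem_filter] at hl
          obtain ⟨hls, hlp⟩ := hl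
          obtain ⟨γ, hγ, hleq⟩ := Finset.mem_image.1 hls
          have hagr : ∀ j, j < k → β₀ (xs.getD j x₀) = γ (xs.getD j x₀) := by
            intro j hj
            have h1 : f l j = f l₀ j := by rw [hlp, hl₀]
            simp only [hf, hj, if_pos, ← hleq, ← hl₀eq, hΨ] at h1
            have hj1 : j < k + 1 := hj.trans (Nat.lt_succ_self k)
            simp only [hj1, if_pos] at h1
            exact h1.symm
          have hmem := hval k hk β₀ hβ₀ γ hγ hagr
          have hlk : l k = γ (xs.getD k x₀) := by
            rw [← hleq]; simp [hΨ]
          show l k ∈ _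
          rw [hlk]
          exact hmem
        · intro l hl l' hl' hll'
          simp only [Finset.mem_filter, Finset.coe_filter, Set.mem_setOf_eq] at hl hl'
          obtain ⟨hls, hlp⟩ := hl
          obtain ⟨hl's, hl'p⟩ := hl'
          obtain ⟨γ, hγ, hleq⟩ := Finset.mem_image.1 hls
          obtain ⟨γ', hγ', hl'eq⟩ := Finset.mem_image.1 hl's
          funext i
          rcases lt_trichotomy i k with hik | rfl | hik
          · have h1 : f l i = f l' i := by rw [hlp, hl'p]
            simpa only [hf, hik, if_pos] using h1
          · exact hll'
          · rw [← hleq, ← hl'eq]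
            have hnot : ¬ i < k + 1 := by omega
            simp [hΨ, hnot]
      have h1 : s.card ≤ c * (s.image f).card :=
        Finset.card_le_mul_card_image s c hfib
      calc s.card ≤ c * (s.image f).card := h1
        _ ≤ c * (F.image (Ψ k)).card :=
          Nat.mul_le_mul_left _ (Finset.card_le_card himg)
        _ ≤ c * c ^ k := Nat.mul_le_mul_left _ (ih hk.le)
        _ = c ^ (k + 1) := by ring
  have hinj' : Set.InjOn (Ψ xs.length) F := by
    intro β hβ γ hγ h
    refine hinj β (by simpa using hβ) γ (by simpa using hγ) ?_
    intro j hj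
    have := congrFun h j
    simpa only [hΨ, hj, if_pos] using this
  calc F.card = (F.image (Ψ xs.length)).card := (Finset.card_image_of_injOn hinj').symm
    _ ≤ c ^ xs.length := key _ le_rfl

theorem stmt17 {X : Type*} [Fintype X]
    (S : Set (X → X)) (hS : IsTransSub S) (hcomm : IsCommSub S)
    (e : X → X) (he : IsZeroElem S e) (hnil : IsNilpotentSub S e)
    (r : ℕ) (hr : (Set.range e).ncard = r) (hr2 : 2 ≤ r) :
    S.ncard ≤ xi (Fintype.card X - r + 1) := by
  classical
  obtain ⟨heS, hzero⟩ := he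
  obtain ⟨m, hm0, hmprod⟩ := hnil
  -- a point of `X`
  have hne : (Set.range e).Nonempty := Set.nonempty_of_ncard_ne_zero (by omega)
  obtain ⟨x₀, -⟩ := hne
  -- basic facts about the zero
  have h_es : ∀ σ ∈ S, ∀ x, e (σ x) = e x := fun σ hσ x => congrFun (hzero σ hσ).1 x
  have h_se : ∀ σ ∈ S, ∀ x, σ (e x) = e x := fun σ hσ x => congrFun (hzero σ hσ).2 x
  -- "bottom" invariance under the equivalence
  have hbot_equiv : ∀ a b : X, (∀ σ ∈ S, σ a = σ b) → (∀ σ ∈ S, σ a = e a) →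
      (∀ σ ∈ S, σ b = e b) := by
    intro a b hab ha σ hσ
    have h2 : e a = e b := hab e heS
    rw [← hab σ hσ, ha σ hσ, h2]
  -- classes of the equivalence
  set ClassF : X → Finset X :=
    fun u => Finset.univ.filter (fun v => ∀ σ ∈ S, σ v = σ u) with hCF
  have hClassF_mem : ∀ u v : X, v ∈ ClassF u ↔ ∀ σ ∈ S, σ v = σ u := by
    intro u v; simp [hCF]
  have hClassF_self : ∀ u : X, u ∈ ClassF u := by
    intro u; rw [hClassF_mem]; intro σ _; rfl
  have hClassF_eq : ∀ u v : X, (∀ σ ∈ S, σ u = σ v) → ClassF u = ClassF v := by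
    intro u v huv
    ext w
    rw [hClassF_mem, hClassF_mem]
    constructor
    · intro h σ hσ; rw [h σ hσ, huv σ hσ]
    · intro h σ hσ; rw [h σ hσ, huv σ hσ]
  -- max class size
  set cstar := Finset.univ.sup (fun u : X => (ClassF u).card) with hcs
  have hcstar_le : ∀ u : X, (ClassF u).card ≤ cstar := by
    intro u
    rw [hcs]
    exact Finset.le_sup (f := fun u : X => (ClassF u).card) (Finset.mem_univ u)
  obtain ⟨u₀, -, hu₀⟩ := Finset.exists_mem_eq_sup Finset.univ
    ⟨x₀, Finset.mem_univ x₀⟩ (fun u : X => (ClassF u).card)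
  have hc1 : 1 ≤ cstar := by
    rw [hcs, hu₀]
    exact Finset.card_pos.2 ⟨u₀, hClassF_self u₀⟩
  -- annihilation index
  set A : X → Set ℕ := fun u => {k | ∀ L : List (X → X), L.length = k →
    (∀ f ∈ L, f ∈ S) → L.foldr (· ∘ ·) id u = e u} with hA
  have hAm : ∀ u, m ∈ A u := by
    intro u L h1 h2; rw [hmprod L h1 h2]
  set N : X → ℕ := fun u => sInf (A u) with hN
  have hNmem : ∀ u, N u ∈ A u := fun u => Nat.sInf_mem ⟨m, hAm u⟩
  have foldr_comp : ∀ (L : List (X → X)) (g : X → X),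
      L.foldr (· ∘ ·) g = (L.foldr (· ∘ ·) id) ∘ g := by
    intro L
    induction L with
    | nil => intro g; rfl
    | cons f L ih =>
      intro g
      show f ∘ (L.foldr (· ∘ ·) g) = _
      rw [ih]
      rfl
  have hprod_app : ∀ (L : List (X → X)) (σ : X → X) (u : X),
      (L ++ [σ]).foldr (· ∘ ·) id u = L.foldr (· ∘ ·) id (σ u) := by
    intro L σ u
    rw [List.foldr_append, foldr_comp]
    rfl
  -- nonbottom points have positive index
  have hNpos : ∀ u : X, (¬ ∀ σ ∈ S, σ u = e u) → N u ≠ 0 := by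
    intro u hu h0
    apply hu
    have h0' : (0 : ℕ) ∈ A u := h0 ▸ hNmem u
    have hue : u = e u := by
      have := h0' [] rfl (by simp)
      simpa using this
    intro σ hσ
    conv_lhs => rw [hue]
    rw [h_se σ hσ u, ← hue]
  -- index decreases under the action
  have hNdec : ∀ u : X, (¬ ∀ σ ∈ S, σ u = e u) → ∀ σ ∈ S, N (σ u) < N u := by
    intro u hu σ hσ
    have h1 : N u ≠ 0 := hNpos u hu
    have h2 : (N u - 1) ∈ A (σ u) := by
      intro L hL hLS
      have h3 : (L ++ [σ]).length = N u := by simp [hL]; omega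
      have h4 : ∀ f ∈ L ++ [σ], f ∈ S := by
        intro f hf
        rcases List.mem_append.1 hf with h | h
        · exact hLS f h
        · simp only [List.mem_singleton] at h; subst h; exact hσ
      have h5 := hNmem u (L ++ [σ]) h3 h4
      rw [hprod_app] at h5
      rw [h_es σ hσ u]
      exact h5
    have h6 : N (σ u) ≤ N u - 1 := Nat.sInf_le h2
    omega
  -- index is monotone along the equivalence
  have hNle : ∀ t w : X, (∀ σ ∈ S, σ t = σ w) → N w ≠ 0 → N t ≤ N w := by
    intro t w htw h1
    apply Nat.sInf_le
    intro L hL hLS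
    have hLne : L ≠ [] := by
      intro h; subst h; simp at hL; omega
    have hdec := List.dropLast_append_getLast hLne
    have hget : L.getLast hLne ∈ S := hLS _ (List.getLast_mem hLne)
    have h5 := hNmem w L hL hLS
    have hLS' : ∀ f ∈ L.dropLast, f ∈ S := fun f hf => hLS f (List.dropLast_subset L hf)
    calc L.foldr (· ∘ ·) id t
        = (L.dropLast ++ [L.getLast hLne]).foldr (· ∘ ·) id t := by rw [hdec]
      _ = L.dropLast.foldr (· ∘ ·) id ((L.getLast hLne) t) := hprod_app _ _ _
      _ = L.dropLast.foldr (· ∘ ·) id ((L.getLast hLne) w) := by rw [htw _ hget]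
      _ = (L.dropLast ++ [L.getLast hLne]).foldr (· ∘ ·) id w := (hprod_app _ _ _).symm
      _ = L.foldr (· ∘ ·) id w := by rw [hdec]
      _ = e w := h5
      _ = e t := (htw e heS).symm
  -- class representatives
  set repF : X → X := fun u => (ClassF u).toList.headD x₀ with hrepF
  have hpick : ∀ s : Finset X, s.Nonempty → s.toList.headD x₀ ∈ s := by
    intro s hs
    have h1 : s.toList ≠ [] := by
      rw [ne_eq, Finset.toList_eq_nil]
      exact hs.ne_empty
    have h3 : s.toList.headD x₀ ∈ s.toList := by
      cases h2 : s.toList with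
      | nil => exact absurd h2 h1
      | cons a t => simp
    exact Finset.mem_toList.1 h3
  have hrep_mem : ∀ u : X, repF u ∈ ClassF u :=
    fun u => hpick (ClassF u) ⟨u, hClassF_self u⟩
  have hrep_equiv : ∀ u : X, ∀ σ ∈ S, σ (repF u) = σ u :=
    fun u => (hClassF_mem u (repF u)).1 (hrep_mem u)
  have hrep_const : ∀ u v : X, (∀ σ ∈ S, σ u = σ v) → repF u = repF v := by
    intro u v huv
    show (ClassF u).toList.headD x₀ = (ClassF v).toList.headD x₀
    rw [hClassF_eq u v huv]
  -- the finsets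
  set nonbotF : Finset X := Finset.univ.filter (fun u => ¬ ∀ σ ∈ S, σ u = e u) with hnbF
  set R : Finset X := nonbotF.image repF with hR
  set imE : Finset X := Finset.univ.image e with himE
  have hR_nonbot : ∀ t ∈ R, ¬ ∀ σ ∈ S, σ t = e t := by
    intro t ht
    obtain ⟨w, hw, rfl⟩ := Finset.mem_image.1 ht
    have hwnb : ¬ ∀ σ ∈ S, σ w = e w := by
      have := Finset.mem_filter.1 hw
      exact this.2
    intro hbt
    exact hwnb (hbot_equiv (repF w) w (hrep_equiv w) hbt)
  have hR_selfrep : ∀ t ∈ R, repF t = t := by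
    intro t ht
    obtain ⟨w, hw, rfl⟩ := Finset.mem_image.1 ht
    exact hrep_const (repF w) w (hrep_equiv w)
  have hR_inj : ∀ t ∈ R, ∀ t' ∈ R, (∀ σ ∈ S, σ t = σ t') → t = t' := by
    intro t ht t' ht' heq
    rw [← hR_selfrep t ht, ← hR_selfrep t' ht']
    exact hrep_const t t' heq
  have himE_bot : ∀ u ∈ imE, ∀ σ ∈ S, σ u = e u := by
    intro u hu σ hσ
    obtain ⟨z, -, rfl⟩ := Finset.mem_image.1 hu
    rw [h_se σ hσ z, h_se e heS z]
  -- sorted list of representatives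
  set rle : X → X → Prop := fun a b => N a ≤ N b with hrle
  haveI : IsTotal X rle := ⟨fun a b => Nat.le_total (N a) (N b)⟩
  haveI : IsTrans X rle := ⟨fun a b c h1 h2 => le_trans h1 h2⟩
  haveI : DecidableRel rle := fun a b => Nat.decLe _ _
  set xs : List X := List.insertionSort rle R.toList with hxs
  have hxs_sorted : xs.Pairwise rle := List.pairwise_insertionSort rle _
  have hxs_perm : xs.Perm R.toList := List.perm_insertionSort rle _
  have hxs_len : xs.length = R.card := by
    rw [hxs_perm.length_eq, Finset.length_toList]
  have hmem_xs : ∀ t : X, t ∈ xs ↔ t ∈ R := by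
    intro t; rw [hxs_perm.mem_iff, Finset.mem_toList]
  have hxs_pair : ∀ (i j : ℕ) (hi : i < xs.length) (hj : j < xs.length),
      i < j → N (xs[i]'hi) ≤ N (xs[j]'hj) :=
    fun i j hi hj hij => List.pairwise_iff_getElem.1 hxs_sorted i j hi hj hij
  have hgetD : ∀ (j : ℕ) (h : j < xs.length), xs.getD j x₀ = xs[j]'h := by
    intro j h
    simp [List.getD_eq_getElem?_getD, List.getElem?_eq_getElem h]
  -- the finset of S
  have hSfin : S.Finite := Set.toFinite S
  set Sfin : Finset (X → X) := hSfin.toFinset with hSf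
  have hmem_Sfin : ∀ β : X → X, β ∈ Sfin ↔ β ∈ S := fun β => Set.Finite.mem_toFinset hSfin
  -- the key counting bound
  have hval : ∀ k, k < xs.length → ∀ β ∈ Sfin, ∀ γ ∈ Sfin,
      (∀ j, j < k → β (xs.getD j x₀) = γ (xs.getD j x₀)) →
      γ (xs.getD k x₀) ∈ ClassF (β (xs.getD k x₀)) := by
    intro k hk β hβ γ hγ hagr
    have hβS : β ∈ S := (hmem_Sfin β).1 hβ
    have hγS : γ ∈ S := (hmem_Sfin γ).1 hγ
    rw [hgetD k hk, hClassF_mem]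
    intro σ hσ
    have h1 : σ (γ (xs[k]'hk)) = γ (σ (xs[k]'hk)) := congrFun (hcomm σ hσ γ hγS) _
    have h2 : σ (β (xs[k]'hk)) = β (σ (xs[k]'hk)) := congrFun (hcomm σ hσ β hβS) _
    rw [h1, h2]
    by_cases hbw : ∀ τ ∈ S, τ (σ (xs[k]'hk)) = e (σ (xs[k]'hk))
    · rw [hbw γ hγS, hbw β hβS]
    · have hwmem : σ (xs[k]'hk) ∈ nonbotF := by
        rw [hnbF, Finset.mem_filter]
        exact ⟨Finset.mem_univ _, hbw⟩
      have htR : repF (σ (xs[k]'hk)) ∈ R := Finset.mem_image_of_mem repF hwmem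
      have htw : ∀ σ' ∈ S, σ' (repF (σ (xs[k]'hk))) = σ' (σ (xs[k]'hk)) :=
        hrep_equiv _
      obtain ⟨j, hj, hjt⟩ := List.mem_iff_getElem.1 ((hmem_xs _).2 htR)
      have hxkR : (xs[k]'hk) ∈ R := (hmem_xs _).1 (List.getElem_mem hk)
      have hxknbot : ¬ ∀ σ' ∈ S, σ' (xs[k]'hk) = e (xs[k]'hk) := hR_nonbot _ hxkR
      have hNw : N (σ (xs[k]'hk)) < N (xs[k]'hk) := hNdec _ hxknbot σ hσ
      have hNt : N (repF (σ (xs[k]'hk))) ≤ N (σ (xs[k]'hk)) :=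
        hNle _ _ htw (hNpos _ hbw)
      have hjk : j < k := by
        rcases lt_trichotomy j k with h | h | h
        · exact h
        · exfalso
          subst h
          have h7 := hNt.trans_lt hNw
          rw [← hjt] at h7
          exact lt_irrefl _ h7
        · exfalso
          have := hxs_pair k j hk hj h
          rw [hjt] at this
          omega
      have hβγt : β (repF (σ (xs[k]'hk))) = γ (repF (σ (xs[k]'hk))) := by
        have := hagr j hjk
        rw [hgetD j hj, hjt] at this
        exact this
      rw [← htw β hβS, ← htw γ hγS, hβγt]
  have hinj : ∀ β ∈ Sfin, ∀ γ ∈ Sfin,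
      (∀ j, j < xs.length → β (xs.getD j x₀) = γ (xs.getD j x₀)) → β = γ := by
    intro β hβ γ hγ hagr
    have hβS : β ∈ S := (hmem_Sfin β).1 hβ
    have hγS : γ ∈ S := (hmem_Sfin γ).1 hγ
    funext x
    by_cases hbx : ∀ σ ∈ S, σ x = e x
    · rw [hbx β hβS, hbx γ hγS]
    · have hwmem : x ∈ nonbotF := by
        rw [hnbF, Finset.mem_filter]
        exact ⟨Finset.mem_univ _, hbx⟩
      have htR : repF x ∈ R := Finset.mem_image_of_mem repF hwmem
      obtain ⟨j, hj, hjt⟩ := List.mem_iff_getElem.1 ((hmem_xs _).2 htR)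
      have htx : ∀ σ' ∈ S, σ' (repF x) = σ' x := hrep_equiv x
      have := hagr j hj
      rw [hgetD j hj, hjt] at this
      rw [← htx β hβS, ← htx γ hγS, this]
  have hcount : Sfin.card ≤ cstar ^ xs.length :=
    stmt17_count_lemma Sfin xs x₀ x₀ cstar ClassF hcstar_le hval hinj
  -- the partition cardinality bound
  set R' : Finset X := R ∪ imE with hR'
  have hdisjRE : Disjoint R imE := by
    rw [Finset.disjoint_left]
    intro u hu h2
    exact hR_nonbot u hu (himE_bot u h2)
  have himE_card : imE.card = r := by
    have h1 : (Set.range e) = (imE : Set X) := by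
      ext y
      simp [himE, Set.mem_range, eq_comm]
    rw [← hr, h1, Set.ncard_coe_finset]
  have hR'card : R'.card = xs.length + r := by
    rw [hR', Finset.card_union_of_disjoint hdisjRE, himE_card, hxs_len]
  have hR'_inj : ∀ u ∈ R', ∀ v ∈ R', (∀ σ ∈ S, σ u = σ v) → u = v := by
    intro u hu v hv heq
    rcases Finset.mem_union.1 hu with hu' | hu' <;>
      rcases Finset.mem_union.1 hv with hv' | hv'
    · exact hR_inj u hu' v hv' heq
    · exfalso
      apply hR_nonbot u hu'
      exact hbot_equiv v u (fun σ hσ => (heq σ hσ).symm) (himE_bot v hv')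
    · exfalso
      apply hR_nonbot v hv'
      exact hbot_equiv u v heq (himE_bot u hu')
    · obtain ⟨zu, -, rfl⟩ := Finset.mem_image.1 hu'
      obtain ⟨zv, -, rfl⟩ := Finset.mem_image.1 hv'
      have h3 := heq e heS
      rw [h_se e heS zu, h_se e heS zv] at h3
      exact h3
  have hdisjC : ∀ u ∈ R', ∀ v ∈ R', u ≠ v → Disjoint (ClassF u) (ClassF v) := by
    intro u hu v hv huv
    rw [Finset.disjoint_left]
    intro w hw1 hw2
    apply huv
    have h1 := (hClassF_mem u w).1 hw1
    have h2 := (hClassF_mem v w).1 hw2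
    exact hR'_inj u hu v hv (fun σ hσ => (h1 σ hσ).symm.trans (h2 σ hσ))
  have hsum : ∑ u ∈ R', (ClassF u).card ≤ Fintype.card X := by
    rw [← Finset.card_biUnion hdisjC]
    calc (R'.biUnion ClassF).card ≤ Finset.univ.card :=
          Finset.card_le_card (Finset.subset_univ _)
      _ = Fintype.card X := Finset.card_univ
  -- a maximal class sits at some member of R'
  have hw₀ : ∃ w₀ ∈ R', (ClassF w₀).card = cstar := by
    by_cases hbu₀ : ∀ σ ∈ S, σ u₀ = e u₀
    · refine ⟨e u₀, Finset.mem_union_right _ (Finset.mem_image_of_mem e (Finset.mem_univ u₀)), ?_⟩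
      have heq : ClassF (e u₀) = ClassF u₀ := by
        apply hClassF_eq
        intro σ hσ
        rw [h_se σ hσ u₀, hbu₀ σ hσ]
      rw [heq, hcs, ← hu₀]
    · have hwmem : u₀ ∈ nonbotF := by
        rw [hnbF, Finset.mem_filter]
        exact ⟨Finset.mem_univ _, hbu₀⟩
      refine ⟨repF u₀, Finset.mem_union_left _ (Finset.mem_image_of_mem repF hwmem), ?_⟩
      have heq : ClassF (repF u₀) = ClassF u₀ := hClassF_eq _ _ (hrep_equiv u₀)
      rw [heq, hcs, ← hu₀]
  obtain ⟨w₀, hw₀R, hw₀c⟩ := hw₀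
  have hineq : cstar + (R'.card - 1) ≤ Fintype.card X := by
    have h1 : (ClassF w₀).card + ∑ u ∈ R'.erase w₀, (ClassF u).card
        = ∑ u ∈ R', (ClassF u).card := Finset.add_sum_erase R' (fun u => (ClassF u).card) hw₀R
    have h2 : (R'.erase w₀).card ≤ ∑ u ∈ R'.erase w₀, (ClassF u).card := by
      rw [Finset.card_eq_sum_ones]
      exact Finset.sum_le_sum (fun u _ => Finset.card_pos.2 ⟨u, hClassF_self u⟩)
    have h3 : (R'.erase w₀).card = R'.card - 1 := Finset.card_erase_of_mem hw₀R
    rw [← hw₀c, ← h3]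
    omega
  have hmain : cstar + xs.length + r ≤ Fintype.card X + 1 := by
    have hge : 1 ≤ R'.card := Finset.card_pos.2 ⟨w₀, hw₀R⟩
    rw [hR'card] at hineq hge
    omega
  -- final arithmetic
  have hSn : S.ncard = Sfin.card := Set.ncard_eq_toFinset_card S hSfin
  have hxi : (Fintype.card X - r + 1 - xs.length) ^ xs.length ≤ xi (Fintype.card X - r + 1) := by
    have hmem : (Fintype.card X - r + 1 - xs.length) ∈
        Finset.Icc 1 (Fintype.card X - r + 1) := by
      rw [Finset.mem_Icc]
      constructor
      · omega
      · omega
    have heq : Fintype.card X - r + 1 - (Fintype.card X - r + 1 - xs.length) = xs.length := by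
      omega
    have h9 : (Fintype.card X - r + 1 - xs.length) ^
        (Fintype.card X - r + 1 - (Fintype.card X - r + 1 - xs.length)) ≤
        xi (Fintype.card X - r + 1) :=
      Finset.le_sup (f := fun t => t ^ (Fintype.card X - r + 1 - t)) hmem
    rw [heq] at h9
    exact h9
  calc S.ncard = Sfin.card := hSn
    _ ≤ cstar ^ xs.length := hcount
    _ ≤ (Fintype.card X - r + 1 - xs.length) ^ xs.length :=
        Nat.pow_le_pow_left (by omega) _
    _ ≤ xi (Fintype.card X - r + 1) := hxi
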